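/- Assume n ≥ 2, τ_0' = τ_0, τ_1' = τ_1, and τ_0, τ_1 ∈ Z(G). Then for every g ∈ G and w ∈ R with g(w) ∈ C_w, there exists σ ∈ ⟨τ_0, τ_1⟩ with g(w) = σ(w), and for this σ one has g^k(w) = σ^k(w) for every integer k. Consequently, the intersection of any orbit of G_v with any block of ℬ_2 is either empty, a single point, an orbit of a nontrivial element of ⟨τ_0, τ_1⟩, or the entire block of ℬ_2. -/

import Mathlib

abbrev Pt (p n : ℕ) := Fin n → ZMod p

/-- The left regular representation `R_L` of `(ℤ/pℤ)^n` inside `Sym(R)`: all translations. -/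
def RL (p n : ℕ) : Subgroup (Equiv.Perm (Pt p n)) where
  carrier := {σ | ∃ r : Pt p n, ∀ x, σ x = r + x}
  one_mem' := ⟨0, fun x => by simp⟩
  mul_mem' := by
    rintro a b ⟨r, hr⟩ ⟨s, hs⟩
    refine ⟨r + s, fun x => ?_⟩
    simp [Equiv.Perm.mul_apply, hr, hs, add_assoc]
  inv_mem' := by
    rintro a ⟨r, hr⟩
    refine ⟨-r, fun x => ?_⟩
    have h := hr (a⁻¹ x)
    rw [show a (a⁻¹ x) = x from a.apply_symm_apply x] at h
    have h2 : -r + x = a⁻¹ x := by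
      conv_lhs => rw [h]
      abel
    exact h2.symm

/-- The conjugate `π⁻¹ R_L π` of the left regular representation. -/
def RLpi (p n : ℕ) (π : Equiv.Perm (Pt p n)) : Subgroup (Equiv.Perm (Pt p n)) where
  carrier := {σ | ∃ ρ ∈ RL p n, σ = π⁻¹ * ρ * π}
  one_mem' := ⟨1, one_mem _, by group⟩
  mul_mem' := by
    rintro a b ⟨r, hr, rfl⟩ ⟨s, hs, rfl⟩
    exact ⟨r * s, mul_mem hr hs, by group⟩
  inv_mem' := by
    rintro a ⟨r, hr, rfl⟩
    exact ⟨r⁻¹, inv_mem hr, by group⟩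

/-- `σ` belongs to the 2-closure `G^{(2)}` of `G`. -/
def twoClosed {α : Type*} (G : Subgroup (Equiv.Perm α)) (σ : Equiv.Perm α) : Prop :=
  ∀ x y : α, ∃ g ∈ G, σ x = g x ∧ σ y = g y


lemma perm_image_fix {α : Type*} [Finite α] (f : Equiv.Perm α) (s : Set α)
    (h : ∀ x ∈ s, f x ∈ s) : ⇑f '' s = s := by
  apply Set.eq_of_subset_of_ncard_le (Set.image_subset_iff.2 fun x hx => h x hx)
  rw [Set.ncard_image_of_injective s f.injective]

lemma trans_pow {α : Type*} [AddGroup α] (σ : Equiv.Perm α) (r : α)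
    (h : ∀ x, σ x = r + x) (m : ℕ) (x : α) : (σ ^ m) x = m • r + x := by
  induction m with
  | zero => simp
  | succ k ih =>
      rw [pow_succ', Equiv.Perm.mul_apply, ih, h, succ_nsmul', add_assoc]

lemma pow_image_fix {α : Type*} (f : Equiv.Perm α) (s : Set α) (h : ⇑f '' s = s)
    (m : ℕ) : ⇑(f ^ m) '' s = s := by
  induction m with
  | zero => simp
  | succ k ih => rw [pow_succ, Equiv.Perm.coe_mul, Set.image_comp, h, ih]

lemma ncard_span (p n : ℕ) [Fact p.Prime] (u s t : Pt p n) (hs : s ≠ 0)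
    (hst : ∀ c : ZMod p, t ≠ c • s) :
    {x : Pt p n | ∃ a b : ZMod p, x = a • s + b • t + u}.ncard = p ^ 2 := by
  have hinj : Function.Injective (fun ab : ZMod p × ZMod p => ab.1 • s + ab.2 • t + u) := by
    rintro ⟨a, b⟩ ⟨a', b'⟩ hab
    simp only [add_left_inj] at hab
    have hbb : b = b' := by
      by_contra hbb
      apply hst ((b - b')⁻¹ * (a' - a))
      have h1 : (b - b') • t = (a' - a) • s := by
        linear_combination (norm := module) hab
      rw [mul_smul, ← h1, smul_smul, inv_mul_cancel₀ (sub_ne_zero.2 hbb), one_smul]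
    subst hbb
    have h0 : (a - a') • s = 0 := by rw [sub_smul, sub_eq_zero]; exact add_right_cancel hab
    rcases smul_eq_zero.1 h0 with h | h
    · rw [sub_eq_zero] at h; rw [h]
    · exact absurd h hs
  have hset : {x : Pt p n | ∃ a b : ZMod p, x = a • s + b • t + u} =
      Set.range (fun ab : ZMod p × ZMod p => ab.1 • s + ab.2 • t + u) := by
    ext x
    simp only [Set.mem_setOf_eq, Set.mem_range, Prod.exists]
    constructor
    · rintro ⟨a, b, rfl⟩; exact ⟨a, b, rfl⟩
    · rintro ⟨a, b, rfl⟩; exact ⟨a, b, rfl⟩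
  rw [hset, ← Nat.card_coe_set_eq, Nat.card_range_of_injective hinj]
  simp [Nat.card_eq_fintype_card, sq]

set_option maxHeartbeats 1000000 in
/-- If `τ₀, τ₁ ∈ Z(G)`, then for every `g ∈ G` and `w` with `g(w) ∈ C_w` there is
`σ ∈ ⟨τ₀, τ₁⟩` with `g(w) = σ(w)` and `g^k(w) = σ^k(w)` for all `k`; consequently the
intersection of any orbit of `G_v` with any block of `ℬ_2` is empty, a point, an orbit
of a nontrivial element of `⟨τ₀, τ₁⟩`, or the whole block. -/
theorem stmt_14 (p n : ℕ) (hp : p.Prime) (hn : 2 ≤ n)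
    (π : Equiv.Perm (Pt p n))
    (G : Subgroup (Equiv.Perm (Pt p n))) (hG : G = RL p n ⊔ RLpi p n π)
    (hpG : IsPGroup p ↑G)
    (B : ℕ → Set (Set (Pt p n)))
    (hBpart : ∀ i ≤ n, Setoid.IsPartition (B i))
    (hBsize : ∀ i ≤ n, ∀ b ∈ B i, Nat.card b = p ^ i)
    (hBinv : ∀ i ≤ n, ∀ g ∈ G, ∀ b ∈ B i, ⇑g '' b ∈ B i)
    (hBref : ∀ i < n, ∀ b ∈ B i, ∃ c ∈ B (i + 1), b ⊆ c)
    (τ : ℕ → Equiv.Perm (Pt p n))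
    (hτ : ∀ i < n, τ i ∈ RL p n ∧ (∀ b ∈ B (i + 1), ⇑(τ i) '' b = b) ∧
      ¬ ∀ b ∈ B i, ⇑(τ i) '' b = b)
    (v : Pt p n)
    (τ' : ℕ → Equiv.Perm (Pt p n))
    (hτ' : ∀ i < n, τ' i ∈ RLpi p n π ∧ τ' i v = τ i v)
    (hτ'0 : τ' 0 = τ 0) (hτ'1 : τ' 1 = τ 1)
    (hZ : ∀ g ∈ G, Commute g (τ 0) ∧ Commute g (τ 1))
    (Cb : Pt p n → Set (Pt p n)) (hCb : ∀ w, Cb w ∈ B 2 ∧ w ∈ Cb w)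
 :
    (∀ g ∈ G, ∀ w : Pt p n, g w ∈ Cb w →
      ∃ σ ∈ Subgroup.closure {τ 0, τ 1}, g w = σ w ∧ ∀ k : ℤ, (g ^ k) w = (σ ^ k) w) ∧
    (∀ w : Pt p n, ∀ Cc ∈ B 2,
      {x | ∃ g ∈ G, g v = v ∧ g w = x} ∩ Cc = ∅ ∨
      (∃ x₀ : Pt p n, {x | ∃ g ∈ G, g v = v ∧ g w = x} ∩ Cc = {x₀}) ∨
      (∃ σ ∈ Subgroup.closure {τ 0, τ 1}, σ ≠ 1 ∧
        ∃ u : Pt p n, {x | ∃ g ∈ G, g v = v ∧ g w = x} ∩ Cc = {x | ∃ k : ℤ, (σ ^ k) u = x}) ∨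
      {x | ∃ g ∈ G, g v = v ∧ g w = x} ∩ Cc = Cc) := by
  haveI : Fact p.Prime := ⟨hp⟩
  haveI : NeZero p := ⟨hp.ne_zero⟩
  have h0n : 0 < n := by omega
  have h1n : 1 < n := by omega
  obtain ⟨hτ0RL, hτ0fix, hτ0nfix⟩ := hτ 0 h0n
  obtain ⟨hτ1RL, hτ1fix, hτ1nfix⟩ := hτ 1 h1n
  obtain ⟨s0, hs0⟩ := hτ0RL
  obtain ⟨s1, hs1⟩ := hτ1RL
  have hRL0 : τ 0 ∈ RL p n := ⟨s0, hs0⟩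
  have hRL1 : τ 1 ∈ RL p n := ⟨s1, hs1⟩
  have hs0ne : s0 ≠ 0 := by
    intro h
    apply hτ0nfix
    intro b hb
    have h1 : τ 0 = 1 := Equiv.ext fun x => by simp [hs0 x, h]
    rw [h1]
    simp
  have hindep : ∀ c : ZMod p, s1 ≠ c • s0 := by
    intro c hc
    apply hτ1nfix
    intro b hb
    have he : τ 1 = τ 0 ^ c.val := by
      apply Equiv.ext
      intro x
      rw [hs1 x, trans_pow (τ 0) s0 hs0 c.val x, ← Nat.cast_smul_eq_nsmul (ZMod p),
        ZMod.natCast_rightInverse c, hc]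
    rw [he]
    exact pow_image_fix _ _ (hτ0fix b hb) _
  have hclRL : Subgroup.closure {τ 0, τ 1} ≤ RL p n := by
    rw [Subgroup.closure_le]
    intro x hx
    rcases Set.mem_insert_iff.1 hx with rfl | hx
    · exact hRL0
    · rw [Set.mem_singleton_iff] at hx
      subst hx
      exact hRL1
  have hmemB : ∀ i ≤ n, ∀ (x : Pt p n) (b b' : Set (Pt p n)),
      b ∈ B i → b' ∈ B i → x ∈ b → x ∈ b' → b = b' := by
    intro i hi x b b' hb hb' hx hx'
    obtain ⟨c, -, hc⟩ := (hBpart i hi).2 x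
    rw [hc b ⟨hb, hx⟩, hc b' ⟨hb', hx'⟩]
  have hτ0fix2 : ∀ b ∈ B 2, ⇑(τ 0) '' b = b := by
    intro b hb
    apply perm_image_fix
    intro x hx
    obtain ⟨b1, ⟨hb1, hxb1⟩, -⟩ := (hBpart 1 h1n.le).2 x
    obtain ⟨c, hc, hsub⟩ := hBref 1 h1n b1 hb1
    have hcb : c = b := hmemB 2 hn x c b hc hb (hsub hxb1) hx
    have hmem : τ 0 x ∈ b1 := by
      rw [← hτ0fix b1 hb1]
      exact ⟨x, hxb1, rfl⟩
    exact hcb ▸ hsub hmem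
  have hclfix : ∀ σ ∈ Subgroup.closure {τ 0, τ 1}, ∀ b ∈ B 2, ⇑σ '' b = b := by
    intro σ hσ
    induction hσ using Subgroup.closure_induction with
    | mem x hx =>
        rcases Set.mem_insert_iff.1 hx with rfl | hx
        · exact hτ0fix2
        · rw [Set.mem_singleton_iff] at hx
          subst hx
          exact hτ1fix
    | one => intro b _; simp
    | mul x y hx hy ihx ihy =>
        intro b hb
        rw [Equiv.Perm.coe_mul, Set.image_comp, ihy b hb, ihx b hb]
    | inv x hx ihx =>
        intro b hb
        apply perm_image_fix
        intro z hz
        rw [← ihx b hb] at hz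
        obtain ⟨y, hy, rfl⟩ := hz
        simpa using hy
  have hclcomm : ∀ σ ∈ Subgroup.closure {τ 0, τ 1}, ∀ g ∈ G, Commute g σ := by
    intro σ hσ
    induction hσ using Subgroup.closure_induction with
    | mem x hx =>
        intro g hg
        rcases Set.mem_insert_iff.1 hx with rfl | hx
        · exact (hZ g hg).1
        · rw [Set.mem_singleton_iff] at hx
          subst hx
          exact (hZ g hg).2
    | one => intro g hg; exact Commute.one_right g
    | mul x y hx hy ihx ihy => intro g hg; exact (ihx g hg).mul_right (ihy g hg)
    | inv x hx ihx => intro g hg; exact (ihx g hg).inv_right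
  have happly : ∀ (a b : ZMod p) (x : Pt p n),
      (τ 0 ^ a.val * τ 1 ^ b.val) x = a • s0 + b • s1 + x := by
    intro a b x
    rw [Equiv.Perm.mul_apply, trans_pow (τ 1) s1 hs1, trans_pow (τ 0) s0 hs0,
      ← Nat.cast_smul_eq_nsmul (ZMod p) a.val, ← Nat.cast_smul_eq_nsmul (ZMod p) b.val,
      ZMod.natCast_rightInverse a, ZMod.natCast_rightInverse b, add_assoc]
  have h0cl : τ 0 ∈ Subgroup.closure {τ 0, τ 1} :=
    Subgroup.subset_closure (Set.mem_insert _ _)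
  have h1cl : τ 1 ∈ Subgroup.closure {τ 0, τ 1} :=
    Subgroup.subset_closure (Set.mem_insert_of_mem _ rfl)
  have hmemcl : ∀ a b : ZMod p, τ 0 ^ a.val * τ 1 ^ b.val ∈ Subgroup.closure {τ 0, τ 1} :=
    fun a b => mul_mem (pow_mem h0cl _) (pow_mem h1cl _)
  have part1 : ∀ g ∈ G, ∀ w : Pt p n, g w ∈ Cb w →
      ∃ σ ∈ Subgroup.closure {τ 0, τ 1}, g w = σ w ∧ ∀ k : ℤ, (g ^ k) w = (σ ^ k) w := by
    intro g hg w hgw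
    have hOC : {x : Pt p n | ∃ a b : ZMod p, x = a • s0 + b • s1 + w} = Cb w := by
      apply Set.eq_of_subset_of_ncard_le
      · rintro x ⟨a, b, rfl⟩
        rw [← happly a b w, ← hclfix _ (hmemcl a b) (Cb w) (hCb w).1]
        exact ⟨w, (hCb w).2, rfl⟩
      · have h1 := ncard_span p n w s0 s1 hs0ne hindep
        have h2 : (Cb w).ncard = p ^ 2 := by
          rw [← Nat.card_coe_set_eq]
          exact hBsize 2 hn (Cb w) (hCb w).1
        exact le_of_eq (h2.trans h1.symm)
      · exact Set.toFinite _
    rw [← hOC] at hgw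
    obtain ⟨a, b, hab⟩ := hgw
    refine ⟨τ 0 ^ a.val * τ 1 ^ b.val, hmemcl a b, by rw [hab, happly], ?_⟩
    have hgs : g w = (τ 0 ^ a.val * τ 1 ^ b.val) w := by rw [hab, happly]
    set σ := τ 0 ^ a.val * τ 1 ^ b.val with hσdef
    have hcomm : Commute g σ := hclcomm σ (hmemcl a b) g hg
    have hfix : (σ⁻¹ * g) w = w := by
      rw [Equiv.Perm.mul_apply, hgs, ← Equiv.Perm.mul_apply, inv_mul_cancel, Equiv.Perm.one_apply]
    have hcomm2 : Commute σ (σ⁻¹ * g) := ((Commute.refl σ).inv_right).mul_right hcomm.symm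
    intro k
    have hgdecomp : g = σ * (σ⁻¹ * g) := by group
    calc (g ^ k) w = ((σ * (σ⁻¹ * g)) ^ k) w := by rw [← hgdecomp]
    _ = (σ ^ k * (σ⁻¹ * g) ^ k) w := by rw [hcomm2.mul_zpow]
    _ = (σ ^ k) (((σ⁻¹ * g) ^ k) w) := rfl
    _ = (σ ^ k) w := by rw [Equiv.Perm.zpow_apply_eq_self_of_apply_eq_self hfix]
  refine ⟨part1, ?_⟩
  intro w Cc hCc
  set S := {x : Pt p n | ∃ g ∈ G, g v = v ∧ g w = x} with hS
  by_cases hne : S ∩ Cc = ∅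
  · exact Or.inl hne
  right
  obtain ⟨u, huS, huC⟩ := Set.nonempty_iff_ne_empty.2 hne
  have huS2 := huS
  rw [hS] at huS2
  obtain ⟨g0, hg0G, hg0v, hg0w⟩ := huS2
  have hCbu : Cb u = Cc := hmemB 2 hn u (Cb u) Cc (hCb u).1 hCc (hCb u).2 huC
  have hg0inv : g0⁻¹ u = w := by rw [← hg0w, ← Equiv.Perm.mul_apply, inv_mul_cancel, Equiv.Perm.one_apply]
  have hg0vi : g0⁻¹ v = v := by
    conv_lhs => rw [← hg0v]
    rw [← Equiv.Perm.mul_apply, inv_mul_cancel, Equiv.Perm.one_apply]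
  set V := {t : Pt p n | ∃ σ ∈ Subgroup.closure {τ 0, τ 1},
    (∀ x, σ x = t + x) ∧ σ u ∈ S} with hV
  have hSV : S ∩ Cc = {x : Pt p n | ∃ t ∈ V, x = t + u} := by
    ext x
    simp only [Set.mem_inter_iff, Set.mem_setOf_eq]
    constructor
    · rintro ⟨hxS, hxC⟩
      have hxS2 := hxS
      rw [hS] at hxS2
      obtain ⟨g', hg'G, hg'v, hg'w⟩ := hxS2
      have hhG : g' * g0⁻¹ ∈ G := mul_mem hg'G (inv_mem hg0G)
      have hhu : (g' * g0⁻¹) u = x := by rw [Equiv.Perm.mul_apply, hg0inv, hg'w]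
      have hhC : (g' * g0⁻¹) u ∈ Cb u := by rw [hhu, hCbu]; exact hxC
      obtain ⟨σ, hσcl, hσe, -⟩ := part1 _ hhG u hhC
      obtain ⟨t, ht⟩ := hclRL hσcl
      refine ⟨t, ?_, ?_⟩
      · rw [hV]
        refine ⟨σ, hσcl, ht, ?_⟩
        rw [← hσe, hhu]
        exact hxS
      · rw [← ht u, ← hσe, hhu]
    · rintro ⟨t, htV, rfl⟩
      rw [hV] at htV
      obtain ⟨σ, hσcl, hσt, hσS⟩ := htV
      constructor
      · rw [← hσt u]; exact hσS
      · rw [← hσt u, ← hCbu, ← hclfix σ hσcl (Cb u) (hCb u).1]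
        exact ⟨u, (hCb u).2, rfl⟩
  have hVk : ∀ σ ∈ Subgroup.closure {τ 0, τ 1}, σ u ∈ S → ∀ k : ℤ, (σ ^ k) u ∈ S := by
    intro σ hσcl hσS k
    have hσS2 := hσS
    rw [hS] at hσS2
    obtain ⟨g', hg'G, hg'v, hg'w⟩ := hσS2
    have hhG : g' * g0⁻¹ ∈ G := mul_mem hg'G (inv_mem hg0G)
    have hhu : (g' * g0⁻¹) u = σ u := by rw [Equiv.Perm.mul_apply, hg0inv, hg'w]
    have hhv : (g' * g0⁻¹) v = v := by rw [Equiv.Perm.mul_apply, hg0vi, hg'v]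
    have hσuC : σ u ∈ Cb u := by
      rw [← hclfix σ hσcl (Cb u) (hCb u).1]
      exact ⟨u, (hCb u).2, rfl⟩
    obtain ⟨σ₁, hσ₁cl, hσ₁e, hσ₁k⟩ := part1 _ hhG u (by rw [hhu]; exact hσuC)
    have hσeq : σ₁ = σ := by
      obtain ⟨r₁, hr₁⟩ := hclRL hσ₁cl
      obtain ⟨r, hr⟩ := hclRL hσcl
      have hrr : r₁ + u = r + u := by rw [← hr₁ u, ← hr u, ← hσ₁e, hhu]
      have hrr2 : r₁ = r := add_right_cancel hrr
      apply Equiv.ext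
      intro x
      rw [hr₁ x, hr x, hrr2]
    have hk := hσ₁k k
    rw [hσeq] at hk
    rw [hS]
    refine ⟨(g' * g0⁻¹) ^ k * g0, mul_mem (zpow_mem hhG k) hg0G, ?_, ?_⟩
    · rw [Equiv.Perm.mul_apply, hg0v, Equiv.Perm.zpow_apply_eq_self_of_apply_eq_self hhv]
    · rw [Equiv.Perm.mul_apply, hg0w, ← hk]
  have hV0mem : (0 : Pt p n) ∈ V := by
    rw [hV]
    exact ⟨1, one_mem _, fun x => by simp, by simpa using huS⟩
  have hVadd : ∀ t1 ∈ V, ∀ t2 ∈ V, t1 + t2 ∈ V := by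
    intro t1 ht1 t2 ht2
    rw [hV] at ht1 ht2 ⊢
    obtain ⟨σ1, hσ1cl, hσ1t, hσ1S⟩ := ht1
    obtain ⟨σ2, hσ2cl, hσ2t, hσ2S⟩ := ht2
    refine ⟨σ1 * σ2, mul_mem hσ1cl hσ2cl,
      fun x => by rw [Equiv.Perm.mul_apply, hσ2t, hσ1t, add_assoc], ?_⟩
    rw [hS] at hσ1S hσ2S ⊢
    obtain ⟨g1, hg1G, hg1v, hg1w⟩ := hσ1S
    obtain ⟨g2, hg2G, hg2v, hg2w⟩ := hσ2S
    have hhG : g2 * g0⁻¹ ∈ G := mul_mem hg2G (inv_mem hg0G)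
    have hcomm := hclcomm σ1 hσ1cl (g2 * g0⁻¹) hhG
    have hhu : (g2 * g0⁻¹) u = σ2 u := by rw [Equiv.Perm.mul_apply, hg0inv, hg2w]
    refine ⟨(g2 * g0⁻¹) * g1, mul_mem hhG hg1G, ?_, ?_⟩
    · rw [Equiv.Perm.mul_apply, hg1v, Equiv.Perm.mul_apply, hg0vi, hg2v]
    · calc ((g2 * g0⁻¹) * g1) w = (g2 * g0⁻¹) (σ1 u) := by
            rw [Equiv.Perm.mul_apply, hg1w]
      _ = ((g2 * g0⁻¹) * σ1) u := rfl
      _ = (σ1 * (g2 * g0⁻¹)) u := by rw [hcomm.eq]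
      _ = (σ1 * σ2) u := by rw [Equiv.Perm.mul_apply, hhu]; rfl
  have hVnsmul : ∀ t ∈ V, ∀ m : ℕ, m • t ∈ V := by
    intro t ht m
    induction m with
    | zero => simpa using hV0mem
    | succ k ih => rw [succ_nsmul]; exact hVadd _ ih _ ht
  have hVsmul : ∀ t ∈ V, ∀ c : ZMod p, c • t ∈ V := by
    intro t ht c
    have h1 := hVnsmul t ht c.val
    rwa [← Nat.cast_smul_eq_nsmul (ZMod p), ZMod.natCast_rightInverse c] at h1
  by_cases hV0 : ∀ t ∈ V, t = 0
  · left
    refine ⟨u, ?_⟩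
    rw [hSV]
    ext x
    simp only [Set.mem_setOf_eq, Set.mem_singleton_iff]
    constructor
    · rintro ⟨t, htV, rfl⟩
      rw [hV0 t htV, zero_add]
    · rintro rfl
      exact ⟨0, hV0mem, (zero_add _).symm⟩
  right
  push_neg at hV0
  obtain ⟨t0, ht0V, ht0ne⟩ := hV0
  by_cases hlin : ∀ t ∈ V, ∃ c : ZMod p, t = c • t0
  · left
    have ht0V2 := ht0V
    rw [hV] at ht0V2
    obtain ⟨σ0, hσ0cl, hσ0t, hσ0S⟩ := ht0V2
    refine ⟨σ0, hσ0cl, ?_, u, ?_⟩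
    · intro h1
      apply ht0ne
      have h2 := hσ0t u
      rw [h1] at h2
      simpa [eq_comm, left_eq_add] using h2
    · rw [hSV]
      ext x
      simp only [Set.mem_setOf_eq]
      constructor
      · rintro ⟨t, htV, rfl⟩
        obtain ⟨c, rfl⟩ := hlin t htV
        refine ⟨(c.val : ℤ), ?_⟩
        rw [zpow_natCast, trans_pow σ0 t0 hσ0t, ← Nat.cast_smul_eq_nsmul (ZMod p),
          ZMod.natCast_rightInverse c]
      · rintro ⟨k, rfl⟩
        obtain ⟨t, ht⟩ := hclRL (zpow_mem hσ0cl k)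
        refine ⟨t, ?_, ht u⟩
        rw [hV]
        exact ⟨σ0 ^ k, zpow_mem hσ0cl k, ht, hVk σ0 hσ0cl hσ0S k⟩
  · right
    push_neg at hlin
    obtain ⟨t1, ht1V, ht1c⟩ := hlin
    have hspan : ∀ a b : ZMod p, a • t0 + b • t1 ∈ V := fun a b =>
      hVadd _ (hVsmul t0 ht0V a) _ (hVsmul t1 ht1V b)
    have hsub1 : {x : Pt p n | ∃ a b : ZMod p, x = a • t0 + b • t1 + u} ⊆ S ∩ Cc := by
      rintro x ⟨a, b, rfl⟩
      rw [hSV]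
      exact ⟨a • t0 + b • t1, hspan a b, rfl⟩
    have hCcset : {x : Pt p n | ∃ a b : ZMod p, x = a • t0 + b • t1 + u} = Cc := by
      apply Set.eq_of_subset_of_ncard_le (hsub1.trans Set.inter_subset_right)
      have h2 : Cc.ncard = p ^ 2 := by
        rw [← Nat.card_coe_set_eq]
        exact hBsize 2 hn Cc hCc
      exact le_of_eq (h2.trans (ncard_span p n u t0 t1 ht0ne ht1c).symm)
    apply Set.Subset.antisymm Set.inter_subset_right
    intro x hx
    rw [← hCcset] at hx
    exact hsub1 hx
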